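/- Let p be a prime and α, β ≥ 1, and set δ := β·p^α - (β-1)·p^{α-1} - 1. Then p^β does not divide ĉ_{δ,α} := ∑ (-1)^i C(δ, i), where the sum is over all i ∈ {0,…,δ} with i ≡ δ (mod p^α). -/

import Mathlib

open Polynomial Finset

/-! ### Auxiliary polynomial identities over `ℤ[X]` -/

/-- If `C c` divides `(1 - X) * K` then it divides `K`. -/
private lemma cp_cancel (c : ℤ) (K : ℤ[X]) (h : C c ∣ (1 - X) * K) : C c ∣ K := by
  rw [C_dvd_iff_dvd_coeff] at h ⊢
  intro n
  induction n with
  | zero =>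
    have h0 := h 0
    rwa [mul_coeff_zero, coeff_sub, coeff_one, coeff_X, if_pos rfl, if_neg one_ne_zero,
      sub_zero, one_mul] at h0
  | succ n ih =>
    have h1 := h (n + 1)
    have h2 : ((1 - X) * K).coeff (n + 1) = K.coeff (n + 1) - K.coeff n := by
      rw [sub_mul, one_mul, coeff_sub, coeff_X_mul]
    rw [h2] at h1
    have h3 := dvd_add h1 ih
    rwa [sub_add_cancel] at h3

/-- Freshman's dream with error: `(1-X)^(p^s) = 1 - X^(p^s) + p*h`. -/
private lemma freshman (p : ℕ) (hp : p.Prime) (s : ℕ) :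
    ∃ h : ℤ[X], (1 - X) ^ (p ^ s) = 1 - X ^ (p ^ s) + C (p : ℤ) * h := by
  set q := p ^ s with hq
  have hq1 : 1 ≤ q := Nat.one_le_pow _ _ hp.pos
  suffices hdvd : C (p : ℤ) ∣ (1 - X) ^ q - (1 - X ^ q) by
    obtain ⟨h, hh⟩ := hdvd
    exact ⟨h, by linear_combination hh⟩
  have expand : ((1 : ℤ[X]) - X) ^ q
      = ∑ i ∈ range (q + 1), (-X) ^ i * 1 ^ (q - i) * (q.choose i : ℤ[X]) := by
    rw [sub_eq_add_neg, add_comm]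
    exact add_pow _ _ _
  obtain ⟨t, ht⟩ : ∃ t, q = t + 1 := ⟨q - 1, by omega⟩
  rw [expand, ht, Finset.sum_range_succ, Finset.sum_range_succ']
  simp only [pow_zero, one_mul, mul_one, one_pow, Nat.choose_zero_right, Nat.cast_one,
    Nat.choose_self, Nat.sub_self]
  have key : (∑ x ∈ range t, (-X : ℤ[X]) ^ (x+1) * ((t + 1).choose (x+1) : ℤ[X]))
      + 1 + (-X) ^ (t+1) - (1 - X ^ (t+1))
      = (∑ i ∈ range t, (-X : ℤ[X]) ^ (i+1) * ((t+1).choose (i+1) : ℤ[X]))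
      + (((-1 : ℤ[X]) ^ (t+1) + 1) * X ^ (t+1)) := by
    rw [neg_pow]; ring
  rw [key]
  apply dvd_add
  · apply Finset.dvd_sum
    intro i hi
    simp only [Finset.mem_range] at hi
    have hpd : p ∣ (t+1).choose (i+1) := by
      rw [← ht, hq]
      refine hp.dvd_choose_pow (by omega) ?_
      rw [← hq, ht]; omega
    obtain ⟨c, hc⟩ := hpd
    refine Dvd.dvd.mul_left ?_ _
    rw [hc]
    push_cast
    exact Dvd.intro _ rfl
  · refine Dvd.dvd.mul_right ?_ _
    have hC : ((-1 : ℤ[X]) ^ (t+1) + 1) = C ((-1 : ℤ) ^ (t+1) + 1) := by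
      simp [map_add, map_pow]
    rw [hC]
    apply _root_.map_dvd
    by_cases hodd : Odd (t + 1)
    · rw [hodd.neg_one_pow]; simp
    · have heven : Even (t + 1) := Nat.not_odd_iff_even.mp hodd
      have hp2 : p = 2 := by
        rcases Nat.Prime.eq_two_or_odd' hp with h2 | hoddp
        · exact h2
        · exact absurd (ht ▸ (hq ▸ hoddp.pow : Odd q)) hodd
      rw [heven.neg_one_pow, hp2]
      norm_num

private lemma gOne (p : ℕ) (hp : p.Prime) :
    ∃ g₁ g₂ : ℤ[X], (1 - X) ^ p = 1 - X ^ p + C (p : ℤ) * ((1 - X) * g₁)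
      ∧ g₁ = -1 + (1 - X) * g₂ := by
  obtain ⟨g, hg⟩ := freshman p hp 1
  rw [pow_one] at hg
  have hp0 : (p : ℤ) ≠ 0 := Int.natCast_ne_zero.mpr hp.pos.ne'
  have hgroot : g.eval 1 = 0 := by
    have h1 := congrArg (Polynomial.eval 1) hg
    simp only [eval_pow, eval_sub, eval_one, eval_X, sub_self, eval_add, eval_mul, eval_C,
      one_pow] at h1
    rw [zero_pow hp.ne_zero] at h1
    have h2 : (p : ℤ) * g.eval 1 = 0 := by linarith
    rcases mul_eq_zero.mp h2 with h | h
    · exact absurd h hp0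
    · exact h
  obtain ⟨g₀, hg₀⟩ : (X - C 1) ∣ g := dvd_iff_isRoot.mpr hgroot
  set g₁ : ℤ[X] := -g₀ with hg₁def
  have hfac : g = (1 - X) * g₁ := by rw [hg₀, hg₁def]; simp only [C_1]; ring
  have hder : g₁.eval 1 = -1 := by
    have hD := congrArg Polynomial.derivative hg
    rw [hfac] at hD
    simp only [derivative_pow, derivative_add, derivative_sub, derivative_one, derivative_X,
      derivative_mul, derivative_C, zero_sub, zero_mul, zero_add, mul_neg, mul_one] at hD
    have hE := congrArg (Polynomial.eval 1) hD
    simp only [eval_neg, eval_mul, eval_pow, eval_sub, eval_one, eval_X, eval_natCast, eval_C,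
      eval_add, sub_self, one_pow, mul_one] at hE
    rw [zero_pow (by have := hp.two_le; omega : p - 1 ≠ 0)] at hE
    have h2 : (p : ℤ) * (g₁.eval 1 + 1) = 0 := by linarith
    rcases mul_eq_zero.mp h2 with h | h
    · exact absurd h hp0
    · linarith
  obtain ⟨g₂₀, hg₂₀⟩ : (X - C 1) ∣ (g₁ + 1) := by
    apply dvd_iff_isRoot.mpr
    simp [IsRoot, hder]
  refine ⟨g₁, -g₂₀, ?_, ?_⟩
  · rw [← hfac]; exact hg
  · have h3 : g₁ + 1 = (1 - X) * -g₂₀ := by rw [hg₂₀]; simp only [C_1]; ring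
    linear_combination h3

/-- `(u + p h)^p = u^p + p² M`. -/
private lemma pow_p_sq (p : ℕ) (hp : p.Prime) (u h : ℤ[X]) :
    ∃ M : ℤ[X], (u + C (p : ℤ) * h) ^ p = u ^ p + C (p : ℤ) ^ 2 * M := by
  suffices hdvd : C (p : ℤ) ^ 2 ∣ (u + C (p : ℤ) * h) ^ p - u ^ p by
    obtain ⟨M, hM⟩ := hdvd
    exact ⟨M, by linear_combination hM⟩
  rw [add_pow]
  obtain ⟨t, ht⟩ : ∃ t, p = t + 1 := ⟨p - 1, by have := hp.two_le; omega⟩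
  rw [ht, Finset.sum_range_succ]
  simp only [Nat.choose_self, Nat.cast_one, mul_one, Nat.sub_self, pow_zero]
  rw [add_sub_assoc, sub_self, add_zero]
  apply Finset.dvd_sum
  intro i hi
  simp only [Finset.mem_range] at hi
  rcases Nat.lt_or_ge i t with hit | hit
  · have hd : (C ((t+1 : ℕ) : ℤ) : ℤ[X]) ^ 2 ∣ (C ((t+1:ℕ):ℤ) * h) ^ (t+1-i) := by
      rw [mul_pow]
      exact (pow_dvd_pow _ (by omega)).mul_right _
    exact (hd.mul_left _).mul_right _
  · have h1 : t + 1 - i = 1 := by omega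
    rw [h1, pow_one]
    have hc : ((t+1).choose i : ℤ[X]) = C ((t+1 : ℕ) : ℤ) := by
      have h2 : (t+1).choose i = t+1 := by
        rw [show i = t from by omega]
        exact Nat.choose_succ_self_right t
      rw [h2, Polynomial.C_eq_natCast]
    rw [hc]
    exact ⟨u ^ i * h * 1, by rw [sq]; ring⟩

private lemma keyA (p α : ℕ) (hp : p.Prime) (hα : 1 ≤ α) :
    ∃ G G₂ H : ℤ[X],
      (1 - X : ℤ[X]) ^ (p ^ α)
        = 1 - X ^ (p ^ α) + C (p : ℤ) * ((1 - X ^ (p ^ (α - 1))) * G) + C (p : ℤ) ^ 2 * H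
      ∧ G = -1 + (1 - X ^ (p ^ (α - 1))) * G₂ := by
  obtain ⟨g₁, g₂, hg1, hg2⟩ := gOne p hp
  obtain ⟨h, hh⟩ := freshman p hp (α - 1)
  set m' := p ^ (α - 1) with hm'
  have hcomp := congrArg (fun f : ℤ[X] => f.comp (X ^ m')) hg1
  simp only [pow_comp, sub_comp, one_comp, X_comp, add_comp, mul_comp, C_comp, ← pow_mul] at hcomp
  rw [show m' * p = p ^ α by rw [hm', ← pow_succ]; congr 1; omega] at hcomp
  set G := g₁.comp (X ^ m') with hG
  set G₂ := g₂.comp (X ^ m') with hG₂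
  have hGeq : G = -1 + (1 - X ^ m') * G₂ := by
    rw [hG, hG₂, hg2]
    simp only [add_comp, neg_comp, one_comp, mul_comp, sub_comp, X_comp]
  obtain ⟨M, hM⟩ := pow_p_sq p hp (1 - X ^ m') h
  refine ⟨G, G₂, M, ?_, hGeq⟩
  have e1 : (1 - X : ℤ[X]) ^ (p ^ α) = ((1 - X) ^ m') ^ p := by
    rw [← pow_mul]
    congr 1
    rw [hm', ← pow_succ]
    congr 1
    omega
  rw [e1, hh, hM, hcomp]

private lemma keyN (p α : ℕ) (hp : p.Prime) (hα : 1 ≤ α) :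
    ∃ h₁ : ℤ[X], (∑ i ∈ range (p ^ (α - 1)), X ^ i : ℤ[X])
      = (1 - X) ^ (p ^ (α - 1) - 1) + C (p : ℤ) * h₁ := by
  obtain ⟨h, hh⟩ := freshman p hp (α - 1)
  set m' := p ^ (α - 1) with hm'
  have hm'1 : 1 ≤ m' := Nat.one_le_pow _ _ hp.pos
  set N' : ℤ[X] := ∑ i ∈ range m', X ^ i with hN'
  have hgeom : N' * (X - 1) = X ^ m' - 1 := geom_sum_mul X m'
  have hYm' : (1 - X : ℤ[X]) ^ m' = (1 - X) * (1 - X) ^ (m' - 1) := by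
    rw [← pow_succ']
    congr 1
    omega
  have hkey : C (p : ℤ) ∣ (1 - X) * (N' - (1 - X) ^ (m' - 1)) := by
    refine ⟨-h, ?_⟩
    have h4 : (1 - X : ℤ[X]) * N' = 1 - X ^ m' := by linear_combination -hgeom
    rw [mul_sub, h4, ← hYm']
    linear_combination -hh
  obtain ⟨h₁, hh₁⟩ := cp_cancel _ _ hkey
  exact ⟨h₁, by linear_combination hh₁⟩

/-- The base identity `L1`. -/
private lemma keyL1 (p α : ℕ) (hp : p.Prime) (hα : 1 ≤ α) :
    ∃ A₁ B₁ : ℤ[X],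
      (1 - X : ℤ[X]) ^ (p ^ α - 1)
        = (∑ i ∈ range (p ^ α), X ^ i) - C (p : ℤ) * (1 - X) ^ (p ^ (α - 1) - 1)
          + C (p : ℤ) * ((1 - X) ^ (p ^ (α - 1)) * A₁) + C (p : ℤ) ^ 2 * B₁ := by
  obtain ⟨G, G₂, H, hA, hG2⟩ := keyA p α hp hα
  obtain ⟨h₁, hN'⟩ := keyN p α hp hα
  obtain ⟨h, hFr⟩ := freshman p hp (α - 1)
  set m := p ^ α with hm
  set m' := p ^ (α - 1) with hm'
  have hm1 : 1 ≤ m := Nat.one_le_pow _ _ hp.pos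
  have hm'1 : 1 ≤ m' := Nat.one_le_pow _ _ hp.pos
  have hp0 : ((p : ℤ)) ≠ 0 := Int.natCast_ne_zero.mpr hp.pos.ne'
  have hC0 : (C (p : ℤ) : ℤ[X]) ≠ 0 := fun hh => hp0 (by simpa using hh)
  set N' : ℤ[X] := ∑ i ∈ range m', X ^ i with hN'def
  set Nm : ℤ[X] := ∑ i ∈ range m, X ^ i with hNm
  have hgeomm : (1 - X : ℤ[X]) * Nm = 1 - X ^ m := by
    have := geom_sum_mul (X : ℤ[X]) m
    linear_combination -this
  have hgeomm' : (1 - X : ℤ[X]) * N' = 1 - X ^ m' := by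
    have := geom_sum_mul (X : ℤ[X]) m'
    linear_combination -this
  have hYm : (1 - X : ℤ[X]) ^ m = (1 - X) * (1 - X) ^ (m - 1) := by
    rw [← pow_succ']; congr 1; omega
  have hstep1 : (1 - X : ℤ[X]) * ((1 - X) ^ (m - 1) - Nm - C (p:ℤ) * (N' * G))
      = C (p:ℤ) ^ 2 * H := by
    rw [mul_sub, mul_sub, ← hYm, hgeomm]
    linear_combination hA - C (p:ℤ) * G * hgeomm'
  have hdvd1 : C (p:ℤ) ∣ ((1 - X : ℤ[X]) ^ (m - 1) - Nm - C (p:ℤ) * (N' * G)) :=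
    cp_cancel _ _ ⟨C (p:ℤ) * H, by rw [hstep1]; ring⟩
  obtain ⟨K₁, hK₁⟩ := hdvd1
  have hstep2 : (1 - X : ℤ[X]) * K₁ = C (p:ℤ) * H := by
    have h2 : C (p:ℤ) * ((1 - X) * K₁) = C (p:ℤ) * (C (p:ℤ) * H) := by
      linear_combination hstep1 - (1 - X) * hK₁
    exact mul_left_cancel₀ hC0 h2
  obtain ⟨M₁, hM₁⟩ := cp_cancel _ _ ⟨H, hstep2⟩
  have hmain : (1 - X : ℤ[X]) ^ (m - 1) = Nm + C (p:ℤ) * (N' * G) + C (p:ℤ) ^ 2 * M₁ := by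
    rw [sq]
    linear_combination hK₁ + C (p:ℤ) * hM₁
  have hu : (1 - X ^ m' : ℤ[X]) = (1 - X) ^ m' - C (p:ℤ) * h := by linear_combination -hFr
  refine ⟨(1 - X) ^ (m' - 1) * G₂,
          M₁ - (1 - X) ^ (m' - 1) * (h * G₂) + h₁ * (-1 + (1 - X ^ m') * G₂), ?_⟩
  rw [hmain, hN', hG2, hu]
  ring

private lemma keyInd (p α : ℕ) (hp : p.Prime) (hα : 1 ≤ α) (j : ℕ) :
    ∃ A B F : ℤ[X],
      (1 - X : ℤ[X]) ^ (j * (p ^ α - p ^ (α - 1)) + (p ^ α - 1))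
        = (-1 : ℤ[X]) ^ j * C (p : ℤ) ^ j * (∑ i ∈ range (p ^ α), X ^ i)
          + (-1 : ℤ[X]) ^ (j + 1) * C (p : ℤ) ^ (j + 1) * (1 - X) ^ (p ^ (α - 1) - 1)
          + C (p : ℤ) ^ (j + 1) * ((1 - X) ^ (p ^ (α - 1)) * A)
          + C (p : ℤ) ^ (j + 2) * B
          + (X ^ (p ^ α) - 1) * F := by
  obtain ⟨G, G₂, H, hA, hG2⟩ := keyA p α hp hα
  obtain ⟨h, hFr⟩ := freshman p hp (α - 1)
  obtain ⟨A₁, B₁, hL1⟩ := keyL1 p α hp hα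
  set m := p ^ α with hm
  set m' := p ^ (α - 1) with hm'
  set Nm : ℤ[X] := ∑ i ∈ range m, X ^ i with hNm
  have hm'1 : 1 ≤ m' := Nat.one_le_pow _ _ hp.pos
  have hmm' : m' * p = m := by rw [hm', hm, ← pow_succ]; congr 1; omega
  have h2m : 2 * m' ≤ m := by
    calc 2 * m' = m' * 2 := by ring
    _ ≤ m' * p := Nat.mul_le_mul_left m' hp.two_le
    _ = m := hmm'
  have hgeomm : (1 - X : ℤ[X]) * Nm = 1 - X ^ m := by
    have := geom_sum_mul (X : ℤ[X]) m
    linear_combination -this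
  have hM1 : Nm * (1 - X : ℤ[X]) ^ (m - m') = (X ^ m - 1) * (-((1 - X) ^ (m - m' - 1))) := by
    have e : (1 - X : ℤ[X]) ^ (m - m') = (1 - X) * (1 - X) ^ (m - m' - 1) := by
      rw [← pow_succ']; congr 1; omega
    rw [e]
    linear_combination (1 - X : ℤ[X]) ^ (m - m' - 1) * hgeomm
  have hM2 : ((1 - X : ℤ[X]) ^ (m' - 1)) * (1 - X) ^ (m - m') = (1 - X) ^ (m - 1) := by
    rw [← pow_add]; congr 1; omega
  have hM3 : ((1 - X : ℤ[X]) ^ m') * (1 - X) ^ (m - m') = (1 - X) ^ m := by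
    rw [← pow_add]; congr 1; omega
  have hM4 : ((1 - X : ℤ[X]) ^ (m - m')) = (1 - X) ^ m' * (1 - X) ^ (m - 2 * m') := by
    rw [← pow_add]; congr 1; omega
  have hAeq : (1 - X : ℤ[X]) ^ m
      = 1 - X ^ m + C (p:ℤ) * (((1 - X) ^ m' - C (p:ℤ) * h) * G) + C (p:ℤ) ^ 2 * H := by
    linear_combination hA - C (p:ℤ) * G * hFr
  induction j with
  | zero =>
    refine ⟨A₁, B₁, 0, ?_⟩
    rw [show 0 * (m - m') + (m - 1) = m - 1 by ring]
    linear_combination hL1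
  | succ j ih =>
    obtain ⟨A, B, F, hIH⟩ := ih
    refine ⟨(-1 : ℤ[X]) ^ (j+1) * A₁ + A * G + B * (1 - X) ^ (m - 2 * m'),
            (-1 : ℤ[X]) ^ (j+1) * B₁ + A * H - A * (h * G),
            -((-1 : ℤ[X]) ^ j * C (p:ℤ) ^ j * (1 - X) ^ (m - m' - 1))
              - C (p:ℤ) ^ (j+1) * A + F * (1 - X) ^ (m - m'), ?_⟩
    rw [show (j+1) * (m - m') + (m - 1) = (j * (m - m') + (m - 1)) + (m - m') by ring, pow_add,
      hIH]
    linear_combination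
      ((-1 : ℤ[X]) ^ j * C (p:ℤ) ^ j) * hM1
      + ((-1 : ℤ[X]) ^ (j+1) * C (p:ℤ) ^ (j+1)) * hM2
      + ((-1 : ℤ[X]) ^ (j+1) * C (p:ℤ) ^ (j+1)) * hL1
      + (C (p:ℤ) ^ (j+1) * A) * hM3
      + (C (p:ℤ) ^ (j+1) * A) * hAeq
      + (C (p:ℤ) ^ (j+2) * B) * hM4

/-! ### Coefficient extraction via the group algebra of `ZMod m` -/

noncomputable section PsiSection

abbrev Amod (m : ℕ) := AddMonoidAlgebra ℤ (ZMod m)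

noncomputable def xiA (m : ℕ) : Amod m := AddMonoidAlgebra.single (1 : ZMod m) (1 : ℤ)

noncomputable def Psi (m : ℕ) : ℤ[X] →ₐ[ℤ] Amod m := Polynomial.aeval (xiA m)

private lemma Psi_X_pow (m k : ℕ) : Psi m (X ^ k) = AddMonoidAlgebra.single ((k : ZMod m)) 1 := by
  rw [Psi, map_pow, aeval_X, xiA, AddMonoidAlgebra.single_pow]
  congr 1
  · rw [nsmul_eq_mul, mul_one]
  · rw [one_pow]

private lemma Psi_Xm_sub_one (m : ℕ) : Psi m (X ^ m - 1) = 0 := by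
  rw [map_sub, Psi_X_pow, map_one, ZMod.natCast_self, AddMonoidAlgebra.one_def, sub_self]

private lemma Psi_term_apply (m : ℕ) (c : ℤ) (k : ℕ) (r : ZMod m) :
    (Psi m (C c * X ^ k)).coeff r = if (k : ZMod m) = r then c else 0 := by
  rw [map_mul, Psi_X_pow]
  rw [show (Psi m) (C c) = algebraMap ℤ (Amod m) c from aeval_C _ _]
  rw [← Algebra.smul_def, AddMonoidAlgebra.smul_single]
  rw [AddMonoidAlgebra.coeff_single, Finsupp.single_apply]
  simp

private lemma Amod_add_apply (m : ℕ) (x y : Amod m) (r : ZMod m) :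
    (x + y).coeff r = x.coeff r + y.coeff r := Finsupp.add_apply _ _ _

private lemma Psi_mul_apply (m : ℕ) (c : ℤ) (f : ℤ[X]) (r : ZMod m) :
    (Psi m (C c * f)).coeff r = c * (Psi m f).coeff r := by
  rw [map_mul]
  rw [show (Psi m) (C c) = algebraMap ℤ (Amod m) c from aeval_C _ _]
  rw [← Algebra.smul_def, AddMonoidAlgebra.coeff_smul_apply]
  simp

private lemma Psi_N_apply (m : ℕ) (hm : 0 < m) (δ : ℕ) :
    (Psi m (∑ i ∈ range m, X ^ i)).coeff ((δ : ZMod m)) = 1 := by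
  rw [map_sum, AddMonoidAlgebra.coeff_sum]
  rw [Finset.sum_apply']
  have hterm : ∀ i ∈ range m,
      (Psi m (X ^ i)).coeff ((δ : ZMod m)) = if i = δ % m then 1 else 0 := by
    intro i hi
    rw [Psi_X_pow, AddMonoidAlgebra.coeff_single, Finsupp.single_apply]
    congr 1
    rw [eq_iff_iff]
    constructor
    · intro h
      have := (ZMod.natCast_eq_natCast_iff' i δ m).mp h
      rwa [Nat.mod_eq_of_lt (Finset.mem_range.mp hi)] at this
    · intro h
      apply (ZMod.natCast_eq_natCast_iff' i δ m).mpr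
      rwa [Nat.mod_eq_of_lt (Finset.mem_range.mp hi)]
  rw [Finset.sum_congr rfl hterm, Finset.sum_ite_eq' (range m) (δ % m) (fun _ => (1:ℤ))]
  rw [if_pos (Finset.mem_range.mpr (Nat.mod_lt δ hm))]

private lemma Psi_pow_apply (m : ℕ) (δ : ℕ) :
    (Psi m ((1 - X) ^ δ)).coeff ((δ : ZMod m))
      = ∑ i ∈ range (δ + 1), if i % m = δ % m then (-1 : ℤ) ^ i * (δ.choose i : ℤ) else 0 := by
  have hexp : ((1 : ℤ[X]) - X) ^ δ
      = ∑ i ∈ range (δ + 1), C ((-1 : ℤ) ^ i * (δ.choose i : ℤ)) * X ^ i := by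
    rw [sub_eq_add_neg, add_comm, add_pow]
    apply Finset.sum_congr rfl
    intro i _
    rw [neg_pow]
    simp only [map_mul, map_pow, map_neg, map_one, one_pow, mul_one]
    rw [Polynomial.C_eq_natCast]
    ring
  rw [hexp, map_sum, AddMonoidAlgebra.coeff_sum, Finset.sum_apply']
  apply Finset.sum_congr rfl
  intro i _
  rw [Psi_term_apply]
  congr 1
  rw [eq_iff_iff]
  exact (ZMod.natCast_eq_natCast_iff' i δ m)

end PsiSection

/-- `ĉ_{δ,α} = ∑ (-1)^i C(δ,i)`, summed over `i ∈ {0,…,δ}` with `i ≡ δ (mod p^α)`. -/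
def cHat (p α δ : ℕ) : ℤ :=
  ∑ i ∈ Finset.range (δ + 1),
    if i % p ^ α = δ % p ^ α then (-1 : ℤ) ^ i * (δ.choose i : ℤ) else 0

theorem cHat_not_div_at_critical_degree (p : ℕ) (hp : p.Prime) (α β : ℕ)
    (hα : 1 ≤ α) (hβ : 1 ≤ β) :
    ¬ (p : ℤ) ^ β ∣ cHat p α (β * p ^ α - (β - 1) * p ^ (α - 1) - 1) := by
  obtain ⟨b, rfl⟩ : ∃ b, β = b + 1 := ⟨β - 1, by omega⟩
  set m := p ^ α with hm
  set m' := p ^ (α - 1) with hm'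
  have hm1 : 1 ≤ m := Nat.one_le_pow _ _ hp.pos
  have hm'le : m' ≤ m := Nat.pow_le_pow_right hp.pos (by omega)
  -- rewrite the degree
  have hδ : (b + 1) * m - (b + 1 - 1) * m' - 1 = b * (m - m') + (m - 1) := by
    have h1 : b * m' ≤ b * m := Nat.mul_le_mul_left _ hm'le
    rw [Nat.add_sub_cancel, Nat.mul_sub, add_mul, one_mul]
    generalize b * m = s at h1 ⊢
    generalize b * m' = t at h1 ⊢
    omega
  rw [hδ]
  set δ' := b * (m - m') + (m - 1) with hδ'
  -- main structural identity
  obtain ⟨A, B, F, hid⟩ := keyInd p α hp hα b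
  rw [← hm, ← hm', ← hδ'] at hid
  -- apply Psi and evaluate at δ'
  have happ := congrArg (fun f : ℤ[X] => (Psi m f).coeff ((δ' : ZMod m))) hid
  -- left side is cHat
  have hL : (Psi m ((1 - X) ^ δ')).coeff ((δ' : ZMod m)) = cHat p α δ' := by
    rw [Psi_pow_apply, cHat, ← hm]
  -- normalize the scalar factors into `C`
  have e1 : ((-1 : ℤ[X]) ^ b * C (p : ℤ) ^ b) * (∑ i ∈ range m, X ^ i)
      = C ((-1 : ℤ) ^ b * (p : ℤ) ^ b) * (∑ i ∈ range m, X ^ i) := by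
    simp only [map_mul, map_pow, map_neg, map_one]
  have e2 : ((-1 : ℤ[X]) ^ (b+1) * C (p : ℤ) ^ (b+1)) * (1 - X) ^ (m' - 1)
      = C ((-1 : ℤ) ^ (b+1) * (p : ℤ) ^ (b+1)) * (1 - X) ^ (m' - 1) := by
    simp only [map_mul, map_pow, map_neg, map_one]
  have e3 : (C (p : ℤ) ^ (b+1)) * ((1 - X) ^ m' * A)
      = C ((p : ℤ) ^ (b+1)) * ((1 - X) ^ m' * A) := by
    simp only [map_pow]
  have e4 : (C (p : ℤ) ^ (b+2)) * B = C ((p : ℤ) ^ (b+2)) * B := by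
    simp only [map_pow]
  rw [e1, e2, e3, e4] at happ
  rw [hL] at happ
  simp only [map_add, Amod_add_apply, Psi_mul_apply] at happ
  rw [Psi_N_apply m (by omega) δ'] at happ
  have hzero : (Psi m ((X ^ m - 1) * F)).coeff ((δ' : ZMod m)) = 0 := by
    rw [map_mul, Psi_Xm_sub_one, zero_mul]
    rfl
  rw [hzero] at happ
  -- now happ : cHat p α δ' = (-1)^b p^b * 1 + (-1)^(b+1) p^(b+1) * z₁ + p^(b+1) * z₂ + p^(b+2) * z₃ + 0
  intro hdvd
  set z₁ := (Psi m ((1 - X) ^ (m' - 1))).coeff ((δ' : ZMod m)) with hz₁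
  set z₂ := (Psi m ((1 - X) ^ m' * A)).coeff ((δ' : ZMod m)) with hz₂
  set z₃ := (Psi m B).coeff ((δ' : ZMod m)) with hz₃
  have hcHat : cHat p α δ'
      = (-1 : ℤ) ^ b * (p : ℤ) ^ b
        + (p : ℤ) ^ (b+1) * ((-1) ^ (b+1) * z₁ + z₂ + (p : ℤ) * z₃) := by
    rw [happ]; ring
  have hd2 : ((p : ℤ)) ^ (b + 1) ∣ (-1 : ℤ) ^ b * (p : ℤ) ^ b := by
    have := dvd_sub hdvd (Dvd.intro _ rfl :
      ((p : ℤ)) ^ (b+1) ∣ (p : ℤ) ^ (b+1) * ((-1) ^ (b+1) * z₁ + z₂ + (p : ℤ) * z₃))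
    rwa [hcHat, add_sub_cancel_right] at this
  have hp0 : ((p : ℤ)) ≠ 0 := Int.natCast_ne_zero.mpr hp.pos.ne'
  have hd3 : (p : ℤ) ∣ (-1 : ℤ) ^ b := by
    have h5 : ((p : ℤ)) ^ b * (p : ℤ) ∣ (p : ℤ) ^ b * (-1 : ℤ) ^ b := by
      rw [← pow_succ]
      rw [show ((p:ℤ))^b * (-1:ℤ)^b = (-1:ℤ)^b * (p:ℤ)^b by ring]
      exact hd2
    exact (mul_dvd_mul_iff_left (pow_ne_zero b hp0)).mp h5
  have hd4 : (p : ℤ) ∣ 1 := by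
    have h6 := hd3.mul_right ((-1 : ℤ) ^ b)
    rwa [show ((-1:ℤ))^b * (-1:ℤ)^b = 1 by rw [← pow_add, ← two_mul, pow_mul]; norm_num] at h6
  have := Int.le_of_dvd one_pos hd4
  have h7 : (2 : ℤ) ≤ (p : ℤ) := by exact_mod_cast hp.two_le
  omega
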